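/- Let Λ > 0 and let r₃ < 0 < r₂ < r₁ be real numbers. Define f(r) = −(Λ/(3r))·(r − r₁)·(r − r₂)·(r − r₃), the elliptic modulus k by k² = (−r₃·(r₁ − r₂))/(r₁·(r₂ − r₃)), the amplitude φ(r) = arcsin(√(r₁·(r − r₂)/(r·(r₁ − r₂)))), the constant C_Λ = 2·√(3/Λ)/√(r₁·(r₂ − r₃)), and F(φ) = ∫_0^φ (1 − k²·sin²θ)^{−1/2} dθ. Then for every r ∈ (r₂, r₁), ∫_{r₂}^{r} dx/(x·√(f(x))) = C_Λ·F(φ(r)). -/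

import Mathlib

open MeasureTheory Set Real

set_option maxHeartbeats 2000000 in
/-- Köttler (Schwarzschild–de Sitter) isotropic-map integral in elliptic form:
for r in the static region (r₂, r₁), ∫_{r₂}^{r} dx/(x√(f x)) = C_Λ F(φ(r)). -/
theorem kottler_isotropic_integral_elliptic
    (Λ r₁ r₂ r₃ : ℝ) (hΛ : 0 < Λ) (h3 : r₃ < 0) (h2 : 0 < r₂) (h21 : r₂ < r₁)
    (f : ℝ → ℝ)
    (hf : ∀ r, f r = -(Λ / (3 * r)) * (r - r₁) * (r - r₂) * (r - r₃))
    (k2 : ℝ) (hk2 : k2 = (-r₃ * (r₁ - r₂)) / (r₁ * (r₂ - r₃)))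
    (φ : ℝ → ℝ)
    (hφ : ∀ r, φ r = Real.arcsin (Real.sqrt (r₁ * (r - r₂) / (r * (r₁ - r₂)))))
    (CΛ : ℝ) (hCΛ : CΛ = 2 * Real.sqrt (3 / Λ) / Real.sqrt (r₁ * (r₂ - r₃)))
    (F : ℝ → ℝ)
    (hF : ∀ φ₀ : ℝ, F φ₀ = ∫ θ in (0:ℝ)..φ₀, 1 / Real.sqrt (1 - k2 * Real.sin θ ^ 2)) :
    ∀ r ∈ Set.Ioo r₂ r₁,
      (∫ x in r₂..r, 1 / (x * Real.sqrt (f x))) = CΛ * F (φ r) := by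
  intro r hr
  obtain ⟨hr2, hr1⟩ := hr
  have hr₁0 : 0 < r₁ := h2.trans h21
  have h12 : 0 < r₁ - r₂ := sub_pos.mpr h21
  have h23 : 0 < r₂ - r₃ := sub_pos.mpr (h3.trans h2)
  have hr0 : 0 < r := h2.trans hr2
  have hk2pos : 0 < k2 := by
    rw [hk2]
    apply div_pos (by nlinarith) (by positivity)
  have hk2lt : k2 < 1 := by
    rw [hk2, div_lt_one (by positivity)]
    nlinarith
  -- the elliptic integrand
  set G : ℝ → ℝ := fun θ => 1 / Real.sqrt (1 - k2 * Real.sin θ ^ 2) with hG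
  have hGpos : ∀ θ : ℝ, 0 < 1 - k2 * Real.sin θ ^ 2 := by
    intro θ
    have h1 : Real.sin θ ^ 2 ≤ 1 := Real.sin_sq_le_one θ
    nlinarith
  have hGcont : Continuous G := by
    apply Continuous.div continuous_const
    · exact (continuous_const.sub (continuous_const.mul (Real.continuous_sin.pow 2))).sqrt
    · intro θ; exact ne_of_gt (Real.sqrt_pos.mpr (hGpos θ))
  have hFeq : F = fun t => ∫ θ in (0:ℝ)..t, G θ := funext hF
  have hFd : ∀ t : ℝ, HasDerivAt F (G t) t := by
    intro t
    rw [hFeq]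
    exact (hGcont.integral_hasStrictDerivAt 0 t).hasDerivAt
  have hFcont : Continuous F := by
    rw [continuous_iff_continuousAt]
    exact fun t => (hFd t).continuousAt
  -- the substitution function u
  set u : ℝ → ℝ := fun x => r₁ * (x - r₂) / (x * (r₁ - r₂)) with hu
  have hφeq : φ = fun x => Real.arcsin (Real.sqrt (u x)) := funext fun x => hφ x
  -- the derivative identity on the open interval
  have hkey : ∀ x ∈ Set.Ioo r₂ r, HasDerivAt (fun y => CΛ * F (φ y))
      (1 / (x * Real.sqrt (f x))) x := by
    intro x hx
    have hx2 : r₂ < x := hx.1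
    have hx1 : x < r₁ := hx.2.trans hr1
    have hx0 : 0 < x := h2.trans hx2
    have hxne : x * (r₁ - r₂) ≠ 0 := ne_of_gt (mul_pos hx0 h12)
    have hu0 : 0 < u x := div_pos (mul_pos hr₁0 (sub_pos.mpr hx2)) (mul_pos hx0 h12)
    have hult : u x < 1 := by
      rw [hu, div_lt_one (mul_pos hx0 h12)]
      nlinarith
    -- derivative of u
    have hud : HasDerivAt u (r₁ * r₂ / (x ^ 2 * (r₁ - r₂))) x := by
      have h1 : HasDerivAt (fun y => r₁ * (y - r₂)) (r₁ * 1) x :=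
        ((hasDerivAt_id x).sub_const r₂).const_mul r₁
      have h2' : HasDerivAt (fun y => y * (r₁ - r₂)) (1 * (r₁ - r₂)) x :=
        (hasDerivAt_id x).mul_const _
      have := h1.div h2' hxne
      refine this.congr_deriv ?_
      rw [div_eq_div_iff (pow_ne_zero 2 hxne) (mul_pos (pow_pos hx0 2) h12).ne']
      ring
    -- derivative of sqrt ∘ u
    have hsqd : HasDerivAt (fun y => Real.sqrt (u y))
        (1 / (2 * Real.sqrt (u x)) * (r₁ * r₂ / (x ^ 2 * (r₁ - r₂)))) x :=
      (Real.hasDerivAt_sqrt (ne_of_gt hu0)).comp x hud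
    -- derivative of arcsin ∘ sqrt ∘ u
    have hsu1 : Real.sqrt (u x) < 1 := by
      have := Real.sqrt_lt_sqrt hu0.le hult
      rwa [Real.sqrt_one] at this
    have harc : HasDerivAt Real.arcsin (1 / Real.sqrt (1 - Real.sqrt (u x) ^ 2))
        (Real.sqrt (u x)) :=
      Real.hasDerivAt_arcsin (by intro h; nlinarith [Real.sqrt_nonneg (u x)]) (ne_of_lt hsu1)
    have hφd : HasDerivAt φ (1 / Real.sqrt (1 - Real.sqrt (u x) ^ 2) *
        (1 / (2 * Real.sqrt (u x)) * (r₁ * r₂ / (x ^ 2 * (r₁ - r₂))))) x := by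
      rw [hφeq]
      exact harc.comp x hsqd
    have hHd := ((hFd (φ x)).comp x hφd).const_mul CΛ
    refine hHd.congr_deriv (Eq.symm ?_)
    -- now the algebraic identity
    have hsq : Real.sqrt (u x) ^ 2 = u x := Real.sq_sqrt hu0.le
    have hsin : Real.sin (φ x) = Real.sqrt (u x) := by
      rw [hφeq]
      exact Real.sin_arcsin (le_trans (by norm_num) (Real.sqrt_nonneg _)) hsu1.le
    have hGval : G (φ x) = 1 / Real.sqrt (1 - k2 * u x) := by
      rw [hG]
      simp only [hsin, hsq]
    -- closed forms for the radicands
    have hA1 : 1 - u x = r₂ * (r₁ - x) / (x * (r₁ - r₂)) := by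
      rw [hu]; field_simp; ring
    have hA2 : 1 - k2 * u x = r₂ * (x - r₃) / (x * (r₂ - r₃)) := by
      rw [hu, hk2]; field_simp; ring
    have h1u : 0 < 1 - u x := by linarith
    have h1ku : 0 < 1 - k2 * u x := by
      rw [hA2]
      exact div_pos (mul_pos h2 (by linarith)) (mul_pos hx0 h23)
    have hfx : f x = Λ / (3 * x) * ((r₁ - x) * ((x - r₂) * (x - r₃))) := by
      rw [hf]; ring
    have hfpos : 0 < f x := by
      rw [hfx]
      have : 0 < r₁ - x := by linarith
      have : 0 < x - r₂ := by linarith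
      have : 0 < x - r₃ := by linarith
      positivity
    rw [hGval, hsq]
    -- A = B via squares
    set A : ℝ := CΛ * (1 / Real.sqrt (1 - k2 * u x) *
        (1 / Real.sqrt (1 - u x) * (1 / (2 * Real.sqrt (u x)) * (r₁ * r₂ / (x ^ 2 * (r₁ - r₂))))))
      with hA
    have hCΛpos : 0 ≤ CΛ := by rw [hCΛ]; positivity
    have hAnn : 0 ≤ A := by
      rw [hA]
      have h1 : (0:ℝ) ≤ r₁ * r₂ / (x ^ 2 * (r₁ - r₂)) := by positivity
      positivity
    have hBnn : 0 ≤ 1 / (x * Real.sqrt (f x)) := by positivity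
    have hsqs : (1 / (x * Real.sqrt (f x))) ^ 2 = A ^ 2 := by
      have hCsq : CΛ ^ 2 = 4 * (3 / Λ) / (r₁ * (r₂ - r₃)) := by
        rw [hCΛ, div_pow, mul_pow, Real.sq_sqrt (by positivity),
          Real.sq_sqrt (by positivity : (0:ℝ) ≤ r₁ * (r₂ - r₃))]
        norm_num
      have e1 : (1 / Real.sqrt (1 - k2 * u x)) ^ 2 = 1 / (1 - k2 * u x) := by
        rw [div_pow, one_pow, Real.sq_sqrt h1ku.le]
      have e2 : (1 / Real.sqrt (1 - u x)) ^ 2 = 1 / (1 - u x) := by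
        rw [div_pow, one_pow, Real.sq_sqrt h1u.le]
      have e3 : (1 / (2 * Real.sqrt (u x))) ^ 2 = 1 / (4 * u x) := by
        rw [div_pow, one_pow, mul_pow, Real.sq_sqrt hu0.le]
        norm_num
      have e4 : (1 / (x * Real.sqrt (f x))) ^ 2 = 1 / (x ^ 2 * f x) := by
        rw [div_pow, one_pow, mul_pow, Real.sq_sqrt hfpos.le]
      have hA3 : u x = r₁ * (x - r₂) / (x * (r₁ - r₂)) := rfl
      rw [e4, hA, mul_pow, mul_pow, mul_pow, mul_pow, hCsq, e1, e2, e3, hA1, hA2, hA3, hfx,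
        div_pow]
      have n1 : x ≠ 0 := ne_of_gt hx0
      have n2 : r₁ - r₂ ≠ 0 := ne_of_gt h12
      have n3 : r₂ - r₃ ≠ 0 := ne_of_gt h23
      have n4 : r₂ ≠ 0 := ne_of_gt h2
      have n5 : r₁ - x ≠ 0 := ne_of_gt (by linarith)
      have n6 : x - r₃ ≠ 0 := ne_of_gt (by linarith)
      have n7 : x - r₂ ≠ 0 := ne_of_gt (by linarith)
      have n8 : Λ ≠ 0 := ne_of_gt hΛ
      have n9 : r₁ ≠ 0 := ne_of_gt hr₁0
      field_simp
    calc 1 / (x * Real.sqrt (f x)) = Real.sqrt ((1 / (x * Real.sqrt (f x))) ^ 2) :=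
          (Real.sqrt_sq hBnn).symm
      _ = Real.sqrt (A ^ 2) := by rw [hsqs]
      _ = A := Real.sqrt_sq hAnn
  -- continuity of the antiderivative on [r₂, r]
  have hucont : ContinuousOn u (Set.Icc r₂ r) := by
    rw [hu]
    apply ContinuousOn.div
    · exact (continuous_const.mul (continuous_id.sub continuous_const)).continuousOn
    · exact (continuous_id.mul continuous_const).continuousOn
    · intro y hy
      exact ne_of_gt (mul_pos (h2.trans_le hy.1) h12)
  have hHcont : ContinuousOn (fun y => CΛ * F (φ y)) (Set.Icc r₂ r) := by
    apply continuousOn_const.mul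
    apply hFcont.comp_continuousOn
    rw [hφeq]
    exact Real.continuous_arcsin.comp_continuousOn hucont.sqrt
  -- integrability of the singular integrand
  set c : ℝ := Λ / (3 * r) * ((r₁ - r) * (r₂ - r₃)) with hc
  have hr1r : 0 < r₁ - r := by linarith
  have hcpos : 0 < c := by rw [hc]; positivity
  set C : ℝ := 1 / (r₂ * Real.sqrt c) with hC
  have hcomp : IntervalIntegrable (fun x => C * ((x - r₂) ^ (-(1/2) : ℝ))) volume r₂ r := by
    have h0 : IntervalIntegrable (fun y : ℝ => y ^ (-(1/2) : ℝ)) volume 0 (r - r₂) :=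
      intervalIntegral.intervalIntegrable_rpow' (by norm_num)
    have h1 := h0.comp_sub_right r₂
    simp only [zero_add, sub_add_cancel] at h1
    exact h1.const_mul C
  have hfposIoc : ∀ x ∈ Set.Ioc r₂ r, 0 < f x := by
    intro x hx
    have hx2 : r₂ < x := hx.1
    have hx1 : x < r₁ := lt_of_le_of_lt hx.2 hr1
    have hx0 : 0 < x := h2.trans hx2
    have e : f x = Λ / (3 * x) * ((r₁ - x) * ((x - r₂) * (x - r₃))) := by rw [hf]; ring
    rw [e]
    have t1 : 0 < r₁ - x := by linarith
    have t2 : 0 < x - r₂ := by linarith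
    have t3 : 0 < x - r₃ := by linarith
    positivity
  have hgcont : ContinuousOn (fun x => 1 / (x * Real.sqrt (f x))) (Set.Ioc r₂ r) := by
    have hfcont : ContinuousOn f (Set.Ioc r₂ r) := by
      have hpoly : ContinuousOn (fun y => -(Λ / (3 * y)) * (y - r₁) * (y - r₂) * (y - r₃))
          (Set.Ioc r₂ r) := by
        apply ContinuousOn.mul
        apply ContinuousOn.mul
        apply ContinuousOn.mul
        · apply ContinuousOn.neg
          apply continuousOn_const.div (continuous_const.mul continuous_id).continuousOn
          intro y hy
          exact ne_of_gt (show (0:ℝ) < 3 * y by have := h2.trans hy.1; positivity)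
        · exact (continuous_id.sub continuous_const).continuousOn
        · exact (continuous_id.sub continuous_const).continuousOn
        · exact (continuous_id.sub continuous_const).continuousOn
      exact hpoly.congr (fun y _ => hf y)
    apply continuousOn_const.div ((continuous_id.continuousOn).mul hfcont.sqrt)
    intro y hy
    exact ne_of_gt (mul_pos (h2.trans hy.1) (Real.sqrt_pos.mpr (hfposIoc y hy)))
  have hgint : IntervalIntegrable (fun x => 1 / (x * Real.sqrt (f x))) volume r₂ r := by
    apply hcomp.mono_fun
    · rw [Set.uIoc_of_le hr2.le]
      exact hgcont.aestronglyMeasurable measurableSet_Ioc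
    · rw [Set.uIoc_of_le hr2.le]
      filter_upwards [ae_restrict_mem measurableSet_Ioc] with x hx
      have hx2 : r₂ < x := hx.1
      have hxr : x ≤ r := hx.2
      have hx0 : 0 < x := h2.trans hx2
      have hxr2 : 0 < x - r₂ := by linarith
      have hx1 : x < r₁ := lt_of_le_of_lt hxr hr1
      -- the lower bound f x ≥ c * (x - r₂)
      have hfl : c * (x - r₂) ≤ f x := by
        have e : f x = Λ * ((r₁ - x) * ((x - r₂) * (x - r₃))) / (3 * x) := by
          rw [hf]; field_simp; ring
        have ec : c * (x - r₂) = Λ * ((r₁ - r) * (r₂ - r₃)) * (x - r₂) / (3 * r) := by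
          rw [hc]; ring
        rw [e, ec, div_le_div_iff₀ (by positivity) (by positivity)]
        have t1 : (r₁ - r) * (r₂ - r₃) ≤ (r₁ - x) * (x - r₃) :=
          mul_le_mul (by linarith) (by linarith) (by linarith) (by linarith)
        have t2 : (r₁ - r) * (r₂ - r₃) * x ≤ (r₁ - x) * (x - r₃) * r :=
          mul_le_mul t1 hxr hx0.le
            (mul_nonneg (by linarith) (by linarith))
        have t3 : 3 * Λ * (x - r₂) * ((r₁ - r) * (r₂ - r₃) * x) ≤
            3 * Λ * (x - r₂) * ((r₁ - x) * (x - r₃) * r) :=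
          mul_le_mul_of_nonneg_left t2 (by positivity)
        have e1 : Λ * ((r₁ - r) * (r₂ - r₃)) * (x - r₂) * (3 * x) =
            3 * Λ * (x - r₂) * ((r₁ - r) * (r₂ - r₃) * x) := by ring
        have e2 : Λ * ((r₁ - x) * ((x - r₂) * (x - r₃))) * (3 * r) =
            3 * Λ * (x - r₂) * ((r₁ - x) * (x - r₃) * r) := by ring
        rw [e1, e2]
        exact t3
      have hsf : Real.sqrt c * Real.sqrt (x - r₂) ≤ Real.sqrt (f x) := by
        rw [← Real.sqrt_mul hcpos.le]
        exact Real.sqrt_le_sqrt hfl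
      have hdpos : 0 < r₂ * (Real.sqrt c * Real.sqrt (x - r₂)) := by positivity
      have hden : r₂ * (Real.sqrt c * Real.sqrt (x - r₂)) ≤ x * Real.sqrt (f x) :=
        mul_le_mul hx2.le hsf (by positivity) hx0.le
      have hineq : 1 / (x * Real.sqrt (f x)) ≤ 1 / (r₂ * (Real.sqrt c * Real.sqrt (x - r₂))) :=
        one_div_le_one_div_of_le hdpos hden
      have hrw : C * (x - r₂) ^ (-(1/2) : ℝ) =
          1 / (r₂ * (Real.sqrt c * Real.sqrt (x - r₂))) := by
        rw [hC, Real.rpow_neg hxr2.le, ← Real.sqrt_eq_rpow]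
        have s1 : Real.sqrt c ≠ 0 := ne_of_gt (Real.sqrt_pos.mpr hcpos)
        have s2 : Real.sqrt (x - r₂) ≠ 0 := ne_of_gt (Real.sqrt_pos.mpr hxr2)
        field_simp
      rw [Real.norm_eq_abs, Real.norm_eq_abs, abs_of_nonneg (by positivity),
        abs_of_nonneg (by positivity)]
      rw [hrw]
      exact hineq
  -- fundamental theorem of calculus
  have key := intervalIntegral.integral_eq_sub_of_hasDeriv_right_of_le hr2.le hHcont
      (fun x hx => (hkey x hx).hasDerivWithinAt) hgint
  rw [key]
  have hφr₂ : φ r₂ = 0 := by rw [hφ]; simp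
  have hF0 : F 0 = 0 := by rw [hF]; simp
  rw [hφr₂, hF0, mul_zero, sub_zero]
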